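/- For every modal formula A: A is satisfiable in a serial Kripke model (i.e., A is D-satisfiable) if and only if f(A) is satisfiable in an LPP1-model, where f is the translation replacing every occurrence of □ with P_{≥1}. -/

import Mathlib

/-- Rationals in the unit interval `ℚ ∩ [0,1]`. -/
abbrev Prob01 : Type := {s : ℚ // 0 ≤ s ∧ s ≤ 1}

/-- The rational `1` as an element of `ℚ ∩ [0,1]`. -/
def probOne : Prob01 := ⟨1, by norm_num⟩

/-- The formulas of LPP1 (the iterated probabilistic logic over classical
propositional logic): `A ::= p | ¬A | A ∧ A | P_{≥s} A`, `s ∈ ℚ ∩ [0,1]`. -/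
inductive LPP1Form : Type where
  | atom : ℕ → LPP1Form
  | neg : LPP1Form → LPP1Form
  | conj : LPP1Form → LPP1Form → LPP1Form
  | geq : Prob01 → LPP1Form → LPP1Form

/-- An LPP1-model `⟨U, W, H, μ, v⟩` (data part): a nonempty set `U` of worlds and,
for each world `w`, a set `W_w ⊆ U`, a family `H_w` of subsets, a set function
`μ_w`, and an evaluation `v_w`. -/
structure LPP1Model where
  U : Type
  ne : Nonempty U
  Ww : U → Set U
  Hw : U → Set (Set U)
  μw : U → Set U → ℝ
  v : U → ℕ → Bool

/-- Truth at a world: `M, w ⊨ p` iff `v_w(p) = true`; `¬`, `∧` classical;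
`M, w ⊨ P_{≥s} A` iff `μ_w([A]_{M,w}) ≥ s`, where `[A]_{M,w} = {u ∈ W_w | M, u ⊨ A}`. -/
def LPP1Form.sat (M : LPP1Model) : LPP1Form → M.U → Prop
  | .atom p, w => M.v w p = true
  | .neg A, w => ¬ LPP1Form.sat M A w
  | .conj A B, w => LPP1Form.sat M A w ∧ LPP1Form.sat M B w
  | .geq s A, w => (s.1 : ℝ) ≤ M.μw w {u ∈ M.Ww w | LPP1Form.sat M A u}

/-- `[A]_{M,w} = {u ∈ W_w | M, u ⊨ A}`. -/
def LPP1Model.truthSet (M : LPP1Model) (A : LPP1Form) (w : M.U) : Set M.U :=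
  {u ∈ M.Ww w | LPP1Form.sat M A u}

/-- `M` is an LPP1-model: for every world `w`, `⟨W_w, H_w, μ_w⟩` is a probability
space (`H_w` a σ-algebra over `W_w`, `μ_w : H_w → [0,1]` σ-additive with
`μ_w(W_w) = 1`), and `[A]_{M,w} ∈ H_w` for every formula `A` and world `w`. -/
structure IsLPP1Model (M : LPP1Model) : Prop where
  mem_sub : ∀ w : M.U, ∀ V ∈ M.Hw w, V ⊆ M.Ww w
  top_mem : ∀ w : M.U, M.Ww w ∈ M.Hw w
  compl_mem : ∀ w : M.U, ∀ V ∈ M.Hw w, M.Ww w \ V ∈ M.Hw w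
  iUnion_mem : ∀ (w : M.U) (f : ℕ → Set M.U),
    (∀ k, f k ∈ M.Hw w) → (⋃ k, f k) ∈ M.Hw w
  nonneg : ∀ w : M.U, ∀ V ∈ M.Hw w, 0 ≤ M.μw w V
  le_one : ∀ w : M.U, ∀ V ∈ M.Hw w, M.μw w V ≤ 1
  total : ∀ w : M.U, M.μw w (M.Ww w) = 1
  sigma_additive : ∀ (w : M.U) (f : ℕ → Set M.U), (∀ k, f k ∈ M.Hw w) →
    Pairwise (Function.onFun Disjoint f) →
    HasSum (fun k => M.μw w (f k)) (M.μw w (⋃ k, f k))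
  meas : ∀ (A : LPP1Form) (w : M.U), M.truthSet A w ∈ M.Hw w

/-- Modal formulas: `A ::= p | ¬A | A ∧ A | □A`. -/
inductive ModalForm : Type where
  | atom : ℕ → ModalForm
  | neg : ModalForm → ModalForm
  | conj : ModalForm → ModalForm → ModalForm
  | box : ModalForm → ModalForm

/-- A Kripke model `⟨W, R, v⟩`: a nonempty set of worlds, an accessibility
relation, and a truth assignment at each world. -/
structure KripkeModel where
  W : Type
  ne : Nonempty W
  R : W → W → Prop
  v : W → ℕ → Bool

/-- Truth in a Kripke model: `M, w ⊨ p` iff `v_w(p) = true`; `¬`, `∧` classical;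
`M, w ⊨ □B` iff `M, u ⊨ B` for all `u ∈ R[w]`. -/
def ModalForm.sat (M : KripkeModel) : ModalForm → M.W → Prop
  | .atom p, w => M.v w p = true
  | .neg A, w => ¬ ModalForm.sat M A w
  | .conj A B, w => ModalForm.sat M A w ∧ ModalForm.sat M B w
  | .box A, w => ∀ u : M.W, M.R w u → ModalForm.sat M A u

/-- A Kripke model is serial if `R[w] ≠ ∅` for every world `w`. -/
def KripkeModel.Serial (M : KripkeModel) : Prop := ∀ w : M.W, ∃ u : M.W, M.R w u

/-- The translation `f` from modal formulas to LPP1-formulas, replacing every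
occurrence of `□` with `P_{≥1}`. -/
def boxToProb : ModalForm → LPP1Form
  | .atom p => .atom p
  | .neg A => .neg (boxToProb A)
  | .conj A B => .conj (boxToProb A) (boxToProb B)
  | .box A => .geq probOne (boxToProb A)

namespace IsLPP1Model
variable {M : LPP1Model} (hM : IsLPP1Model M)
include hM

lemma empty_mem (w : M.U) : (∅ : Set M.U) ∈ M.Hw w := by
  have := hM.compl_mem w _ (hM.top_mem w); simpa using this

lemma mu_empty (w : M.U) : M.μw w ∅ = 0 := by
  have h := hM.sigma_additive w (fun _ => ∅) (fun _ => hM.empty_mem w)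
    (by intro i j hij; simp [Function.onFun])
  have h2 : (⋃ _ : ℕ, (∅ : Set M.U)) = ∅ := by simp
  rw [h2] at h
  have := (summable_const_iff (M.μw w ∅)).mp h.summable
  exact this

lemma union_mem (w : M.U) {V₁ V₂ : Set M.U} (h1 : V₁ ∈ M.Hw w) (h2 : V₂ ∈ M.Hw w) :
    V₁ ∪ V₂ ∈ M.Hw w := by
  have := hM.iUnion_mem w (fun k => if k = 0 then V₁ else if k = 1 then V₂ else ∅)
    (by intro k; split_ifs <;> simp [h1, h2, hM.empty_mem w])
  have e : (⋃ k : ℕ, if k = 0 then V₁ else if k = 1 then V₂ else ∅) = V₁ ∪ V₂ := by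
    ext x; simp only [Set.mem_iUnion, Set.mem_union]
    constructor
    · rintro ⟨k, hk⟩; split_ifs at hk with h h' <;> simp_all
    · rintro (hx | hx)
      · exact ⟨0, by simp [hx]⟩
      · exact ⟨1, by simp [hx]⟩
  rwa [e] at this

lemma inter_mem (w : M.U) {V₁ V₂ : Set M.U} (h1 : V₁ ∈ M.Hw w) (h2 : V₂ ∈ M.Hw w) :
    V₁ ∩ V₂ ∈ M.Hw w := by
  have e : V₁ ∩ V₂ = M.Ww w \ ((M.Ww w \ V₁) ∪ (M.Ww w \ V₂)) := by
    have s1 := hM.mem_sub w V₁ h1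
    have s2 := hM.mem_sub w V₂ h2
    ext x
    simp only [Set.mem_inter_iff, Set.mem_diff, Set.mem_union, not_or, not_and, not_not]
    constructor
    · rintro ⟨hx1, hx2⟩
      exact ⟨s1 hx1, fun _ => hx1, fun _ => hx2⟩
    · rintro ⟨hw, hx1, hx2⟩
      exact ⟨hx1 hw, hx2 hw⟩
  rw [e]
  exact hM.compl_mem w _ (hM.union_mem w (hM.compl_mem w _ h1) (hM.compl_mem w _ h2))

lemma diff_mem (w : M.U) {V₁ V₂ : Set M.U} (h1 : V₁ ∈ M.Hw w) (h2 : V₂ ∈ M.Hw w) :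
    V₁ \ V₂ ∈ M.Hw w := by
  have e : V₁ \ V₂ = V₁ ∩ (M.Ww w \ V₂) := by
    have s1 := hM.mem_sub w V₁ h1
    ext x; simp only [Set.mem_diff, Set.mem_inter_iff]
    exact ⟨fun ⟨a, b⟩ => ⟨a, s1 a, b⟩, fun ⟨a, _, b⟩ => ⟨a, b⟩⟩
  rw [e]; exact hM.inter_mem w h1 (hM.compl_mem w _ h2)

lemma add2 (w : M.U) {V₁ V₂ : Set M.U} (h1 : V₁ ∈ M.Hw w) (h2 : V₂ ∈ M.Hw w)
    (hd : Disjoint V₁ V₂) : M.μw w (V₁ ∪ V₂) = M.μw w V₁ + M.μw w V₂ := by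
  classical
  set f : ℕ → Set M.U := fun k => if k = 0 then V₁ else if k = 1 then V₂ else ∅ with hf
  have hmem : ∀ k, f k ∈ M.Hw w := by
    intro k; simp only [hf]; split_ifs <;> simp [h1, h2, hM.empty_mem w]
  have hdisj : Pairwise (Function.onFun Disjoint f) := by
    intro i j hij
    show Disjoint (f i) (f j)
    simp only [hf]
    split_ifs <;> simp_all [hd, hd.symm]
  have hs := hM.sigma_additive w f hmem hdisj
  have e : (⋃ k, f k) = V₁ ∪ V₂ := by
    ext x; simp only [Set.mem_iUnion, Set.mem_union, hf]
    constructor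
    · rintro ⟨k, hk⟩; split_ifs at hk with h h' <;> simp_all
    · rintro (hx | hx)
      · exact ⟨0, by simp [hx]⟩
      · exact ⟨1, by simp [hx]⟩
  rw [e] at hs
  have hs2 : HasSum (fun k => M.μw w (f k)) (M.μw w V₁ + M.μw w V₂) := by
    have ha : HasSum (fun k : ℕ => if k = 0 then M.μw w V₁ else 0) (M.μw w V₁) :=
      hasSum_ite_eq 0 _
    have hb : HasSum (fun k : ℕ => if k = 1 then M.μw w V₂ else 0) (M.μw w V₂) :=
      hasSum_ite_eq 1 _
    have := ha.add hb
    convert this using 1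
    funext k
    simp only [hf]
    split_ifs <;> simp_all [hM.mu_empty w]
  exact hs.unique hs2

lemma mono (w : M.U) {V₁ V₂ : Set M.U} (h1 : V₁ ∈ M.Hw w) (h2 : V₂ ∈ M.Hw w)
    (hsub : V₁ ⊆ V₂) : M.μw w V₁ ≤ M.μw w V₂ := by
  have e : V₂ = V₁ ∪ (V₂ \ V₁) := by
    ext x; simp only [Set.mem_union, Set.mem_diff]; tauto
  have := hM.add2 w h1 (hM.diff_mem w h2 h1) (Set.disjoint_sdiff_right)
  rw [← e] at this
  have := hM.nonneg w _ (hM.diff_mem w h2 h1)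
  linarith [hM.add2 w h1 (hM.diff_mem w h2 h1) (Set.disjoint_sdiff_right), e ▸ (rfl : M.μw w V₂ = M.μw w V₂)]

lemma inter_full (w : M.U) {V₁ V₂ : Set M.U} (h1 : V₁ ∈ M.Hw w) (h2 : V₂ ∈ M.Hw w)
    (f1 : M.μw w V₁ = 1) (f2 : M.μw w V₂ = 1) : M.μw w (V₁ ∩ V₂) = 1 := by
  have hu : M.μw w (V₁ ∪ V₂) = M.μw w V₁ + M.μw w (V₂ \ V₁) := by
    have e : V₁ ∪ V₂ = V₁ ∪ (V₂ \ V₁) := by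
      ext x; simp only [Set.mem_union, Set.mem_diff]; tauto
    rw [e]; exact hM.add2 w h1 (hM.diff_mem w h2 h1) Set.disjoint_sdiff_right
  have hv : M.μw w V₂ = M.μw w (V₂ ∩ V₁) + M.μw w (V₂ \ V₁) := by
    have e : V₂ = (V₂ ∩ V₁) ∪ (V₂ \ V₁) := by
      ext x; simp only [Set.mem_union, Set.mem_inter_iff, Set.mem_diff]; tauto
    calc M.μw w V₂ = M.μw w ((V₂ ∩ V₁) ∪ (V₂ \ V₁)) := by rw [← e]
      _ = _ := hM.add2 w (hM.inter_mem w h2 h1) (hM.diff_mem w h2 h1)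
            (Set.disjoint_sdiff_right.mono_left Set.inter_subset_right)
  have hle : M.μw w (V₁ ∪ V₂) ≤ 1 := hM.le_one w _ (hM.union_mem w h1 h2)
  have hle2 : M.μw w (V₂ ∩ V₁) ≤ 1 := hM.le_one w _ (hM.inter_mem w h2 h1)
  have e2 : V₁ ∩ V₂ = V₂ ∩ V₁ := Set.inter_comm _ _
  rw [e2]; linarith

end IsLPP1Model

/-- Subformulas of a modal formula (including the formula itself). -/
def ModalForm.subf : ModalForm → List ModalForm
  | .atom p => [.atom p]
  | .neg A => .neg A :: A.subf
  | .conj A B => .conj A B :: (A.subf ++ B.subf)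
  | .box A => .box A :: A.subf

lemma ModalForm.self_mem_subf (A : ModalForm) : A ∈ A.subf := by
  cases A <;> simp [subf]

lemma ModalForm.subf_sub {A B : ModalForm} (h : B ∈ A.subf) : B.subf ⊆ A.subf := by
  induction A with
  | atom p => simp [subf] at h; subst h; exact fun x hx => hx
  | neg A ih =>
      rcases (by simpa [subf] using h) with h' | h'
      · subst h'; exact fun x hx => hx
      · intro x hx; exact List.mem_cons_of_mem _ (ih h' hx)
  | conj A A' ih ih' =>
      rcases (by simpa [subf] using h) with h' | h' | h'
      · subst h'; exact fun x hx => hx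
      · intro x hx
        exact List.mem_cons_of_mem _ (List.mem_append_left _ (ih h' hx))
      · intro x hx
        exact List.mem_cons_of_mem _ (List.mem_append_right _ (ih' h' hx))
  | box A ih =>
      rcases (by simpa [subf] using h) with h' | h'
      · subst h'; exact fun x hx => hx
      · intro x hx; exact List.mem_cons_of_mem _ (ih h' hx)

lemma ModalForm.neg_mem {A B : ModalForm} (h : ModalForm.neg B ∈ A.subf) : B ∈ A.subf :=
  ModalForm.subf_sub h (by simp [subf, self_mem_subf])

lemma ModalForm.conj_mem {A B C : ModalForm} (h : ModalForm.conj B C ∈ A.subf) :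
    B ∈ A.subf ∧ C ∈ A.subf :=
  ⟨ModalForm.subf_sub h (by simp [subf, self_mem_subf]),
   ModalForm.subf_sub h (by simp [subf, self_mem_subf])⟩

lemma ModalForm.box_mem {A B : ModalForm} (h : ModalForm.box B ∈ A.subf) : B ∈ A.subf :=
  ModalForm.subf_sub h (by simp [subf, self_mem_subf])

section BackwardDir

variable {M : LPP1Model} (hM : IsLPP1Model M) (A : ModalForm)

open scoped Classical in
/-- The finite intersection of the measure-one truth sets `[f(B)]_w`,
`B` ranging over a list of modal formulas. -/
noncomputable def interFull (M : LPP1Model) (w : M.U) : List ModalForm → Set M.U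
  | [] => M.Ww w
  | B :: L =>
      (if LPP1Form.sat M (.geq probOne (boxToProb B)) w then M.truthSet (boxToProb B) w
       else M.Ww w) ∩ interFull M w L

lemma mem_interFull (M : LPP1Model) (w u : M.U) (L : List ModalForm) :
    u ∈ interFull M w L ↔ u ∈ M.Ww w ∧
      ∀ B ∈ L, LPP1Form.sat M (.geq probOne (boxToProb B)) w →
        LPP1Form.sat M (boxToProb B) u := by
  induction L with
  | nil => simp [interFull]
  | cons B L ih =>
      simp only [interFull, Set.mem_inter_iff, ih, List.mem_cons]
      constructor
      · rintro ⟨h1, h2, h3⟩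
        refine ⟨h2, ?_⟩
        rintro C (rfl | hC) hc
        · rw [if_pos hc] at h1; exact h1.2
        · exact h3 C hC hc
      · rintro ⟨h1, h2⟩
        refine ⟨?_, h1, fun C hC hc => h2 C (Or.inr hC) hc⟩
        split_ifs with hc
        · exact ⟨h1, h2 B (Or.inl rfl) hc⟩
        · exact h1

include hM in
lemma interFull_mem (w : M.U) (L : List ModalForm) : interFull M w L ∈ M.Hw w := by
  induction L with
  | nil => exact hM.top_mem w
  | cons B L ih =>
      refine hM.inter_mem w ?_ ih
      split_ifs
      · exact hM.meas _ w
      · exact hM.top_mem w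

include hM in
lemma interFull_full (w : M.U) (L : List ModalForm) : M.μw w (interFull M w L) = 1 := by
  induction L with
  | nil => exact hM.total w
  | cons B L ih =>
      refine hM.inter_full w ?_ (interFull_mem hM w L) ?_ ih
      · split_ifs
        · exact hM.meas _ w
        · exact hM.top_mem w
      · split_ifs with hc
        · refine le_antisymm (hM.le_one w _ (hM.meas _ w)) ?_
          have : ((probOne.1 : ℚ) : ℝ) ≤ M.μw w (M.truthSet (boxToProb B) w) := hc
          simpa [probOne] using this
        · exact hM.total w

/-- The Kripke model extracted from an LPP1-model. -/
noncomputable def kripkeOf (M : LPP1Model) (A : ModalForm) : KripkeModel where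
  W := M.U
  ne := M.ne
  R := fun w u => u ∈ interFull M w A.subf
  v := M.v

include hM in
lemma kripkeOf_serial : (kripkeOf M A).Serial := by
  intro w
  by_contra h
  push_neg at h
  have he : interFull M w A.subf = ∅ := by
    ext u; simpa using (show u ∉ interFull M w A.subf from h u)
  have := interFull_full hM w A.subf
  rw [he, hM.mu_empty w] at this
  norm_num at this

include hM in
lemma kripkeOf_truth : ∀ B ∈ A.subf, ∀ w : M.U,
    (ModalForm.sat (kripkeOf M A) B w ↔ LPP1Form.sat M (boxToProb B) w) := by
  intro B
  induction B with
  | atom p => intro _ w; simp [ModalForm.sat, LPP1Form.sat, boxToProb, kripkeOf]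
  | neg B ih =>
      intro hB w
      have := ih (ModalForm.neg_mem hB) w
      simp only [ModalForm.sat, LPP1Form.sat, boxToProb]
      tauto
  | conj B C ihB ihC =>
      intro hB w
      have h1 := ihB (ModalForm.conj_mem hB).1 w
      have h2 := ihC (ModalForm.conj_mem hB).2 w
      simp only [ModalForm.sat, LPP1Form.sat, boxToProb]
      tauto
  | box B ih =>
      intro hB w
      have hBm : B ∈ A.subf := ModalForm.box_mem hB
      constructor
      · intro hsat
        show ((probOne.1 : ℚ) : ℝ) ≤ M.μw w {u ∈ M.Ww w | LPP1Form.sat M (boxToProb B) u}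
        have hsub : interFull M w A.subf ⊆ M.truthSet (boxToProb B) w := by
          intro u hu
          have hmem := (mem_interFull M w u A.subf).mp hu
          have hR : (kripkeOf M A).R w u := hu
          have := hsat u hR
          exact ⟨hmem.1, (ih hBm u).mp this⟩
        have := hM.mono w (interFull_mem hM w A.subf) (hM.meas (boxToProb B) w) hsub
        rw [interFull_full hM w A.subf] at this
        simpa [probOne, LPP1Model.truthSet] using this
      · intro hsat u hR
        have hmem := (mem_interFull M w u A.subf).mp hR
        exact (ih hBm u).mpr (hmem.2 B hBm hsat)

end BackwardDir

section Filtration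

open scoped Classical

variable (D : KripkeModel) (A : ModalForm)

/-- The filtration map: a world goes to the set of indices of subformulas of `A`
that it satisfies. -/
noncomputable def filtMap (w : D.W) : Finset ℕ :=
  (Finset.range A.subf.length).filter
    (fun i => ModalForm.sat D (A.subf.getD i (.atom 0)) w)

lemma filtMap_agree {u u' : D.W} (h : filtMap D A u = filtMap D A u') :
    ∀ B ∈ A.subf, (ModalForm.sat D B u ↔ ModalForm.sat D B u') := by
  intro B hB
  obtain ⟨i, hi, hget⟩ := List.mem_iff_getElem.mp hB
  have hg : A.subf.getD i (.atom 0) = B := by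
    rw [List.getD_eq_getElem _ _ hi]; exact hget
  have h1 : i ∈ filtMap D A u ↔ ModalForm.sat D B u := by
    simp [filtMap, hi, hg, hget]
  have h2 : i ∈ filtMap D A u' ↔ ModalForm.sat D B u' := by
    simp [filtMap, hi, hg, hget]
  rw [← h1, ← h2, h]

/-- The filtrated Kripke model, over the countable type `Finset ℕ`. -/
noncomputable def filtModel : KripkeModel where
  W := Finset ℕ
  ne := ⟨∅⟩
  R := fun a b =>
    (∃ u v : D.W, filtMap D A u = a ∧ filtMap D A v = b ∧ D.R u v) ∨
    ((¬ ∃ u : D.W, filtMap D A u = a) ∧ b = a)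
  v := fun a p => if h : ∃ u : D.W, filtMap D A u = a then D.v h.choose p else false

lemma filtModel_serial (hD : D.Serial) : (filtModel D A).Serial := by
  intro a
  by_cases h : ∃ u : D.W, filtMap D A u = a
  · obtain ⟨u, hu⟩ := h
    obtain ⟨v, hv⟩ := hD u
    exact ⟨filtMap D A v, Or.inl ⟨u, v, hu, rfl, hv⟩⟩
  · exact ⟨a, Or.inr ⟨h, rfl⟩⟩

lemma filtModel_truth : ∀ B ∈ A.subf, ∀ u : D.W,
    (ModalForm.sat (filtModel D A) B (filtMap D A u) ↔ ModalForm.sat D B u) := by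
  intro B
  induction B with
  | atom p =>
      intro hB u
      show (filtModel D A).v (filtMap D A u) p = true ↔ D.v u p = true
      have hex : ∃ u' : D.W, filtMap D A u' = filtMap D A u := ⟨u, rfl⟩
      show (if h : ∃ u' : D.W, filtMap D A u' = filtMap D A u then D.v h.choose p
        else false) = true ↔ D.v u p = true
      rw [dif_pos hex]
      exact filtMap_agree D A hex.choose_spec (.atom p) hB
  | neg B ih =>
      intro hB u
      have := ih (ModalForm.neg_mem hB) u
      simp only [ModalForm.sat]; tauto
  | conj B C ihB ihC =>
      intro hB u
      have h1 := ihB (ModalForm.conj_mem hB).1 u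
      have h2 := ihC (ModalForm.conj_mem hB).2 u
      simp only [ModalForm.sat]; tauto
  | box B ih =>
      intro hB u
      have hBm : B ∈ A.subf := ModalForm.box_mem hB
      constructor
      · intro hsat v hRv
        have hR : (filtModel D A).R (filtMap D A u) (filtMap D A v) :=
          Or.inl ⟨u, v, rfl, rfl, hRv⟩
        exact (ih hBm v).mp (hsat _ hR)
      · intro hsat b hRb
        rcases hRb with ⟨u', v', hu', hv', hR⟩ | ⟨hno, _⟩
        · have hbox : ModalForm.sat D (.box B) u' :=
            (filtMap_agree D A hu' (.box B) hB).mpr hsat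
          have : ModalForm.sat D B v' := hbox v' hR
          exact hv' ▸ (ih hBm v').mpr this
        · exact absurd ⟨u, rfl⟩ hno

end Filtration

section CountableToLPP1

open MeasureTheory
open scoped ENNReal

variable (D : KripkeModel)

private noncomputable local instance mSpace : MeasurableSpace D.W := ⊤

lemma measAll (s : Set D.W) : MeasurableSet s := MeasurableSpace.measurableSet_top

/-- A finite discrete base measure giving positive mass to every point of a
countable type. -/
noncomputable def baseMeasure [Encodable D.W] : Measure D.W :=
  Measure.sum (fun u => ((2 : ℝ≥0∞)⁻¹ ^ (Encodable.encode u + 1)) • Measure.dirac u)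

variable [Encodable D.W]

lemma baseMeasure_apply (s : Set D.W) :
    baseMeasure D s = ∑' u, ((2 : ℝ≥0∞)⁻¹ ^ (Encodable.encode u + 1)) * s.indicator 1 u := by
  rw [baseMeasure, Measure.sum_apply _ (measAll D s)]
  congr 1
  funext u
  rw [Measure.smul_apply, Measure.dirac_apply' _ (measAll D s), smul_eq_mul]

lemma baseMeasure_singleton (x : D.W) :
    baseMeasure D {x} = (2 : ℝ≥0∞)⁻¹ ^ (Encodable.encode x + 1) := by
  rw [baseMeasure_apply]
  rw [tsum_eq_single x]
  · simp
  · intro u hu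
    simp [Set.indicator_of_notMem, hu]

lemma baseMeasure_pos {s : Set D.W} {x : D.W} (hx : x ∈ s) : 0 < baseMeasure D s := by
  have h1 : baseMeasure D {x} ≤ baseMeasure D s :=
    measure_mono (Set.singleton_subset_iff.mpr hx)
  have h2 : (0 : ℝ≥0∞) < (2 : ℝ≥0∞)⁻¹ ^ (Encodable.encode x + 1) := by
    apply ENNReal.pow_pos
    simp
  calc (0 : ℝ≥0∞) < _ := h2
    _ = baseMeasure D {x} := (baseMeasure_singleton D x).symm
    _ ≤ _ := h1

lemma baseMeasure_ne_top (s : Set D.W) : baseMeasure D s ≠ ⊤ := by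
  have h1 : baseMeasure D s ≤ ∑' n : ℕ, (2 : ℝ≥0∞)⁻¹ ^ (n + 1) := by
    rw [baseMeasure_apply]
    refine le_trans (ENNReal.tsum_le_tsum (fun u => ?_))
      (ENNReal.tsum_comp_le_tsum_of_injective (Encodable.encode_injective) _)
    have : s.indicator (1 : D.W → ℝ≥0∞) u ≤ 1 := by
      classical
      rw [Set.indicator_apply]
      split_ifs <;> simp
    calc ((2 : ℝ≥0∞)⁻¹ ^ (Encodable.encode u + 1)) * s.indicator 1 u
        ≤ ((2 : ℝ≥0∞)⁻¹ ^ (Encodable.encode u + 1)) * 1 := by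
          exact mul_le_mul_right this _
      _ = (2 : ℝ≥0∞)⁻¹ ^ (Encodable.encode u + 1) := by rw [mul_one]
  intro htop
  rw [htop] at h1
  have h2 : ∑' n : ℕ, (2 : ℝ≥0∞)⁻¹ ^ (n + 1) ≠ ⊤ := by
    have : ∑' n : ℕ, (2 : ℝ≥0∞)⁻¹ ^ (n + 1) = 2⁻¹ * ∑' n : ℕ, (2 : ℝ≥0∞)⁻¹ ^ n := by
      rw [← ENNReal.tsum_mul_left]
      congr 1; funext n; ring
    rw [this, ENNReal.tsum_geometric]
    intro h
    rcases ENNReal.mul_eq_top.mp h with ⟨_, h'⟩ | ⟨h', _⟩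
    · have : (1 - (2 : ℝ≥0∞)⁻¹)⁻¹ ≠ ⊤ := by
        rw [ENNReal.inv_ne_top]
        intro hz
        have : (2 : ℝ≥0∞)⁻¹ < 1 := by
          rw [ENNReal.inv_lt_one]; norm_num
        rw [tsub_eq_zero_iff_le] at hz
        exact absurd hz (not_le.mpr this)
      exact this h'
    · simp at h'
  exact h2 (top_le_iff.mp h1)

/-- The successor set of a world. -/
def succSet (w : D.W) : Set D.W := {u | D.R w u}

/-- The normalized measure concentrated on the successors of `w`. -/
noncomputable def nuM (w : D.W) : Measure D.W :=
  (baseMeasure D (succSet D w))⁻¹ • (baseMeasure D).restrict (succSet D w)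

lemma nuM_apply (w : D.W) {V : Set D.W} (hV : V ⊆ succSet D w) :
    nuM D w V = (baseMeasure D (succSet D w))⁻¹ * baseMeasure D V := by
  rw [nuM, Measure.smul_apply, Measure.restrict_apply (measAll D V),
    Set.inter_eq_self_of_subset_left hV, smul_eq_mul]

lemma nuM_total (hD : D.Serial) (w : D.W) : nuM D w (succSet D w) = 1 := by
  rw [nuM_apply D w subset_rfl]
  obtain ⟨u, hu⟩ := hD w
  exact ENNReal.inv_mul_cancel (baseMeasure_pos D (hx := hu)).ne'
    (baseMeasure_ne_top D _)

lemma nuM_ne_top (hD : D.Serial) (w : D.W) (V : Set D.W) : nuM D w V ≠ ⊤ := by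
  have h1 : nuM D w V ≤ nuM D w Set.univ := measure_mono (Set.subset_univ V)
  have h2 : nuM D w Set.univ = nuM D w (succSet D w) := by
    rw [nuM]
    simp only [Measure.smul_apply, Measure.restrict_apply (measAll D _),
      Measure.restrict_apply (measAll D Set.univ), Set.univ_inter,
      Set.inter_eq_self_of_subset_left (subset_rfl : succSet D w ⊆ succSet D w)]
  rw [h2, nuM_total D hD w] at h1
  exact ne_top_of_le_ne_top ENNReal.one_ne_top h1

lemma nuM_le_one (hD : D.Serial) (w : D.W) {V : Set D.W} (hV : V ⊆ succSet D w) :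
    nuM D w V ≤ 1 := by
  calc nuM D w V ≤ nuM D w (succSet D w) := measure_mono hV
    _ = 1 := nuM_total D hD w

lemma nuM_lt_one (hD : D.Serial) (w : D.W) {V : Set D.W} (hV : V ⊆ succSet D w)
    (hne : V ≠ succSet D w) : nuM D w V < 1 := by
  obtain ⟨x, hxS, hxV⟩ : ∃ x, x ∈ succSet D w ∧ x ∉ V := by
    by_contra h
    push_neg at h
    exact hne (Set.Subset.antisymm hV h)
  have hd : Disjoint V {x} := Set.disjoint_singleton_right.mpr hxV
  have hadd : nuM D w (V ∪ {x}) = nuM D w V + nuM D w {x} :=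
    measure_union hd (measAll D {x})
  have hle : nuM D w (V ∪ {x}) ≤ 1 :=
    nuM_le_one D hD w (Set.union_subset hV (Set.singleton_subset_iff.mpr hxS))
  have hxpos : 0 < nuM D w {x} := by
    rw [nuM_apply D w (Set.singleton_subset_iff.mpr hxS)]
    apply ENNReal.mul_pos
    · rw [Ne, ENNReal.inv_eq_zero]
      exact baseMeasure_ne_top D _
    · exact (baseMeasure_pos D (Set.mem_singleton x)).ne'
  calc nuM D w V < nuM D w V + nuM D w {x} :=
        ENNReal.lt_add_right (nuM_ne_top D hD w V) hxpos.ne'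
    _ = nuM D w (V ∪ {x}) := hadd.symm
    _ ≤ 1 := hle

/-- The LPP1-model obtained from a countable serial Kripke model. -/
noncomputable def lppOf : LPP1Model where
  U := D.W
  ne := D.ne
  Ww := fun w => succSet D w
  Hw := fun w => {V | V ⊆ succSet D w}
  μw := fun w V => (nuM D w V).toReal
  v := D.v

lemma lppOf_isModel (hD : D.Serial) : IsLPP1Model (lppOf D) where
  mem_sub := fun w V hV => hV
  top_mem := fun w => by show succSet D w ⊆ succSet D w; exact subset_rfl
  compl_mem := fun w V _ => Set.diff_subset
  iUnion_mem := fun w f hf => Set.iUnion_subset hf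
  nonneg := fun w V _ => ENNReal.toReal_nonneg
  le_one := fun w V hV => by
    have := nuM_le_one D hD w hV
    calc (nuM D w V).toReal ≤ (1 : ℝ≥0∞).toReal :=
          ENNReal.toReal_mono ENNReal.one_ne_top this
      _ = 1 := by simp
  total := fun w => by
    show (nuM D w (succSet D w)).toReal = 1
    rw [nuM_total D hD w]; simp
  sigma_additive := fun w f hf hd => by
    show HasSum (fun k => (nuM D w (f k)).toReal) ((nuM D w (⋃ k, f k)).toReal)
    have hi : nuM D w (⋃ k, f k) = ∑' k, nuM D w (f k) :=
      measure_iUnion hd (fun k => measAll D (f k))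
    have hnt : ∑' k, nuM D w (f k) ≠ ⊤ := by
      rw [← hi]; exact nuM_ne_top D hD w _
    have := ENNReal.hasSum_toReal hnt
    rwa [← ENNReal.tsum_toReal_eq (fun k => nuM_ne_top D hD w (f k)), ← hi] at this
  meas := fun B w => fun u hu => hu.1

lemma lppOf_box (hD : D.Serial) (w : D.W) {V : Set D.W} (hV : V ⊆ succSet D w) :
    ((1 : ℝ) ≤ (lppOf D).μw w V ↔ V = succSet D w) := by
  constructor
  · intro h
    by_contra hne
    have := nuM_lt_one D hD w hV hne
    have hlt : ((nuM D w V).toReal) < 1 := by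
      have := ENNReal.toReal_lt_toReal (nuM_ne_top D hD w V) ENNReal.one_ne_top |>.mpr this
      simpa using this
    exact absurd h (not_le.mpr hlt)
  · rintro rfl
    show (1 : ℝ) ≤ (nuM D w (succSet D w)).toReal
    rw [nuM_total D hD w]
    simp

lemma lppOf_truth (hD : D.Serial) (B : ModalForm) : ∀ u : D.W,
    (LPP1Form.sat (lppOf D) (boxToProb B) u ↔ ModalForm.sat D B u) := by
  induction B with
  | atom p => intro u; exact Iff.rfl
  | neg B ih => intro u; simp only [boxToProb, LPP1Form.sat, ModalForm.sat]; rw [ih u]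
  | conj B C ihB ihC =>
      intro u; simp only [boxToProb, LPP1Form.sat, ModalForm.sat]; rw [ihB u, ihC u]
  | box B ih =>
      intro u
      have hT : {x ∈ (lppOf D).Ww u | LPP1Form.sat (lppOf D) (boxToProb B) x}
          ⊆ succSet D u := fun x hx => hx.1
      constructor
      · intro hsat v hRv
        have h1' : ((probOne.1 : ℚ) : ℝ) ≤ (lppOf D).μw u
            {x ∈ (lppOf D).Ww u | LPP1Form.sat (lppOf D) (boxToProb B) x} := hsat
        have h1 : (1 : ℝ) ≤ (lppOf D).μw u
            {x ∈ (lppOf D).Ww u | LPP1Form.sat (lppOf D) (boxToProb B) x} := by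
          simpa [probOne] using h1'
        have heq := (lppOf_box D hD u hT).mp h1
        have hvmem : v ∈ succSet D u := hRv
        rw [← heq] at hvmem
        exact (ih v).mp hvmem.2
      · intro hsat
        show ((probOne.1 : ℚ) : ℝ) ≤ (lppOf D).μw u
          {x ∈ (lppOf D).Ww u | LPP1Form.sat (lppOf D) (boxToProb B) x}
        have heq : {x ∈ (lppOf D).Ww u | LPP1Form.sat (lppOf D) (boxToProb B) x}
            = succSet D u := by
          apply Set.Subset.antisymm hT
          intro x hx
          exact ⟨hx, (ih x).mpr (hsat x hx)⟩
        rw [heq]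
        have := (lppOf_box D hD u (subset_rfl : succSet D u ⊆ succSet D u)).mpr rfl
        simpa [probOne] using this

end CountableToLPP1

/-- For every modal formula `A`: `A` is satisfiable in a serial Kripke model
(`A` is D-satisfiable) if and only if `f(A)` is satisfiable in an LPP1-model,
where `f` replaces every occurrence of `□` with `P_{≥1}`. -/
theorem d_satisfiable_iff_lpp1_satisfiable (A : ModalForm) :
    (∃ D : KripkeModel, D.Serial ∧ ∃ w : D.W, ModalForm.sat D A w) ↔
    (∃ M : LPP1Model, IsLPP1Model M ∧ ∃ w : M.U, LPP1Form.sat M (boxToProb A) w) := by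
  constructor
  · rintro ⟨D, hser, w, hsat⟩
    let D' := filtModel D A
    have hser' : D'.Serial := filtModel_serial D A hser
    have hsat' : ModalForm.sat D' A (filtMap D A w) :=
      (filtModel_truth D A A A.self_mem_subf w).mpr hsat
    letI : Encodable D'.W := (inferInstance : Encodable (Finset ℕ))
    exact ⟨lppOf D', lppOf_isModel D' hser', filtMap D A w,
      (lppOf_truth D' hser' A (filtMap D A w)).mpr hsat'⟩
  · rintro ⟨M, hM, w, hsat⟩
    exact ⟨kripkeOf M A, kripkeOf_serial hM A, w,
      (kripkeOf_truth hM A A A.self_mem_subf w).mpr hsat⟩
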